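/- Let 0 < ν < 1, c_β > 0, λ_w < 0, and β_k = c_β/(1+k)^ν. Then for any integers 0 ≤ τ ≤ t, ∑_{i=0}^{τ} exp(λ_w·∑_{k=i+1}^{t} β_k)·β_i ≤ (e^{|λ_w| c_β}/|λ_w|)·exp((λ_w c_β/(1-ν))·((1+t)^{1-ν} − (1+τ)^{1-ν})). -/

import Mathlib

open Finset Real


private lemma amgm_aux {p x : ℝ} (hp0 : 0 ≤ p) (hp1 : p ≤ 1) (hx : 0 ≤ x) :
    x ^ p ≤ p * x + (1 - p) := by
  have h := Real.geom_mean_le_arith_mean2_weighted hp0 (by linarith : (0:ℝ) ≤ 1 - p) hx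
    (zero_le_one) (by ring)
  simpa using h

private lemma rpow_gap_lb {p : ℝ} (hp0 : 0 < p) (hp1 : p ≤ 1) {a : ℝ} (ha : 0 ≤ a) :
    p * (1 + a) ^ (p - 1) ≤ (1 + a) ^ p - a ^ p := by
  have h1a : (0:ℝ) < 1 + a := by linarith
  have key : (a / (1 + a)) ^ p ≤ p * (a / (1 + a)) + (1 - p) :=
    amgm_aux hp0.le hp1 (div_nonneg ha h1a.le)
  have hmul : a ^ p = (a / (1 + a)) ^ p * (1 + a) ^ p := by
    rw [← Real.mul_rpow (div_nonneg ha h1a.le) h1a.le, div_mul_cancel₀]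
    exact ne_of_gt h1a
  have hpow : (1 + a) ^ (p - 1) = (1 + a) ^ p / (1 + a) := by
    rw [Real.rpow_sub h1a, Real.rpow_one]
  have h2 : a ^ p ≤ (p * (a / (1 + a)) + (1 - p)) * (1 + a) ^ p := by
    rw [hmul]
    exact mul_le_mul_of_nonneg_right key (Real.rpow_nonneg h1a.le p)
  have h3 : (p * (a / (1 + a)) + (1 - p)) * (1 + a) ^ p
      = (1 + a) ^ p - p * ((1 + a) ^ p / (1 + a)) := by
    field_simp
    ring
  rw [hpow]
  linarith [h3 ▸ h2]

private lemma sinh_mul_le {p : ℝ} (hp0 : 0 ≤ p) (hp1 : p ≤ 1) {s : ℝ} (hs : 0 ≤ s) :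
    Real.sinh (p * s) ≤ p * Real.sinh s := by
  have hderiv : ∀ x : ℝ, HasDerivAt (fun y => p * Real.sinh y - Real.sinh (p * y))
      (p * Real.cosh x - Real.cosh (p * x) * (p * 1)) x := by
    intro x
    exact ((Real.hasDerivAt_sinh x).const_mul p).sub
      ((Real.hasDerivAt_sinh (p * x)).comp x ((hasDerivAt_id x).const_mul p))
  have hmono : MonotoneOn (fun y => p * Real.sinh y - Real.sinh (p * y)) (Set.Ici (0:ℝ)) := by
    apply monotoneOn_of_deriv_nonneg (convex_Ici 0)
    · exact fun x _ => (hderiv x).continuousAt.continuousWithinAt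
    · exact fun x _ => (hderiv x).differentiableAt.differentiableWithinAt
    · intro x hx
      rw [(hderiv x).deriv]
      rw [interior_Ici, Set.mem_Ioi] at hx
      have hc : Real.cosh (p * x) ≤ Real.cosh x := by
        rw [Real.cosh_le_cosh, abs_of_nonneg (mul_nonneg hp0 hx.le), abs_of_nonneg hx.le]
        nlinarith
      nlinarith
  have h0 := hmono (Set.self_mem_Ici) (Set.mem_Ici.mpr hs) hs
  simp only [Real.sinh_zero, mul_zero, sub_zero] at h0
  linarith

private lemma exp_trap {p u v : ℝ} (hp0 : 0 ≤ p) (hp1 : p ≤ 1) (huv : u ≤ v) :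
    Real.exp (p * v) - Real.exp (p * u)
      ≤ p / 2 * (Real.exp v - Real.exp u) * (Real.exp ((p - 1) * u) + Real.exp ((p - 1) * v)) := by
  set s := (v - u) / 2 with hs
  set m := (u + v) / 2 with hm
  have hs0 : 0 ≤ s := by rw [hs]; linarith
  have hu : u = m - s := by rw [hm, hs]; ring
  have hv : v = m + s := by rw [hm, hs]; ring
  have hsinh : Real.sinh (p * s) ≤ p * Real.sinh s := sinh_mul_le hp0 hp1 hs0
  have h2 : Real.sinh (p * s) ≤ p * Real.sinh s * Real.cosh ((p - 1) * s) := by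
    have hco := Real.one_le_cosh ((p - 1) * s)
    have hsnn : 0 ≤ Real.sinh s := Real.sinh_nonneg_iff.mpr hs0
    have hmul := mul_le_mul_of_nonneg_left hco (mul_nonneg hp0 hsnn)
    calc Real.sinh (p * s) ≤ p * Real.sinh s := hsinh
      _ = p * Real.sinh s * 1 := by ring
      _ ≤ p * Real.sinh s * Real.cosh ((p - 1) * s) := hmul
  rw [Real.sinh_eq, Real.sinh_eq, Real.cosh_eq] at h2
  rw [hu, hv]
  have e1 : Real.exp (p * (m + s)) = Real.exp (p * m) * Real.exp (p * s) := by
    rw [← Real.exp_add]; ring_nf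
  have e2 : Real.exp (p * (m - s)) = Real.exp (p * m) * Real.exp (-(p * s)) := by
    rw [← Real.exp_add]; ring_nf
  have e3 : Real.exp (m + s) = Real.exp m * Real.exp s := by rw [← Real.exp_add]
  have e4 : Real.exp (m - s) = Real.exp m * Real.exp (-s) := by rw [← Real.exp_add]; ring_nf
  have e5 : Real.exp ((p - 1) * (m - s)) = Real.exp ((p - 1) * m) * Real.exp (-((p - 1) * s)) := by
    rw [← Real.exp_add]; ring_nf
  have e6 : Real.exp ((p - 1) * (m + s)) = Real.exp ((p - 1) * m) * Real.exp ((p - 1) * s) := by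
    rw [← Real.exp_add]; ring_nf
  have e7 : Real.exp m * Real.exp ((p - 1) * m) = Real.exp (p * m) := by
    rw [← Real.exp_add]; ring_nf
  rw [e1, e2, e3, e4, e5, e6]
  have hpm := Real.exp_pos (p * m)
  have h2' : Real.exp (p * s) - Real.exp (-(p * s))
      ≤ p / 2 * (Real.exp s - Real.exp (-s))
        * (Real.exp (-((p - 1) * s)) + Real.exp ((p - 1) * s)) := by linarith
  calc Real.exp (p * m) * Real.exp (p * s) - Real.exp (p * m) * Real.exp (-(p * s))
      = Real.exp (p * m) * (Real.exp (p * s) - Real.exp (-(p * s))) := by ring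
    _ ≤ Real.exp (p * m) * (p / 2 * (Real.exp s - Real.exp (-s))
          * (Real.exp (-((p - 1) * s)) + Real.exp ((p - 1) * s))) :=
        mul_le_mul_of_nonneg_left h2' hpm.le
    _ = p / 2 * (Real.exp m * Real.exp s - Real.exp m * Real.exp (-s)) *
        (Real.exp ((p - 1) * m) * Real.exp (-((p - 1) * s))
          + Real.exp ((p - 1) * m) * Real.exp ((p - 1) * s)) := by rw [← e7]; ring

private lemma rpow_trap {p : ℝ} (hp0 : 0 < p) (hp1 : p ≤ 1) {a : ℝ} (ha : 0 < a) :
    (1 + a) ^ p - a ^ p ≤ p / 2 * (a ^ (p - 1) + (1 + a) ^ (p - 1)) := by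
  have h1a : (0:ℝ) < 1 + a := by linarith
  have huv : Real.log a ≤ Real.log (1 + a) := Real.log_le_log ha (by linarith)
  have key := exp_trap hp0.le hp1 huv
  rw [Real.exp_log ha, Real.exp_log h1a] at key
  rw [Real.rpow_def_of_pos ha, Real.rpow_def_of_pos h1a,
    Real.rpow_def_of_pos ha, Real.rpow_def_of_pos h1a]
  have harith : (1 + a - a : ℝ) = 1 := by ring
  calc Real.exp (Real.log (1 + a) * p) - Real.exp (Real.log a * p)
      = Real.exp (p * Real.log (1 + a)) - Real.exp (p * Real.log a) := by ring_nf
    _ ≤ p / 2 * (1 + a - a) * (Real.exp ((p - 1) * Real.log a)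
          + Real.exp ((p - 1) * Real.log (1 + a))) := key
    _ = p / 2 * (Real.exp (Real.log a * (p - 1)) + Real.exp (Real.log (1 + a) * (p - 1))) := by
        rw [harith]; ring_nf

private lemma sum_Icc_telescope (f : ℕ → ℝ) (a : ℕ) : ∀ b : ℕ, a ≤ b + 1 →
    ∑ k ∈ Finset.Icc a b, (f (k + 1) - f k) = f (b + 1) - f a := by
  intro b
  induction b with
  | zero =>
    intro hab
    interval_cases a
    · simp
    · simp
  | succ n ih =>
    intro hab
    rcases Nat.lt_or_ge a (n + 2) with h | h
    · have han : a ≤ n + 1 := by omega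
      rw [← Finset.insert_Icc_right_eq_Icc_add_one han, Finset.sum_insert (by simp)]
      rw [ih han]
      ring
    · have : a = n + 2 := by omega
      subst this
      simp

/-- Initial-segment bound: with `β_k = c_β/(1+k)^ν`, `λ_w < 0`, `0 < ν < 1`, for
`0 ≤ τ ≤ t`, `∑_{i=0}^{τ} exp(λ_w·∑_{k=i+1}^{t} β_k)·β_i ≤
(e^{|λ_w| c_β}/|λ_w|)·exp((λ_w c_β/(1-ν))·((1+t)^{1-ν} − (1+τ)^{1-ν}))`. -/
theorem stmt_1 (ν cβ lw : ℝ) (hν0 : 0 < ν) (hν1 : ν < 1) (hc : 0 < cβ) (hlw : lw < 0)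
    (τ t : ℕ) (hτt : τ ≤ t) :
    ∑ i ∈ Finset.range (τ + 1),
        Real.exp (lw * ∑ k ∈ Finset.Icc (i + 1) t, cβ / (1 + (k : ℝ)) ^ ν) *
          (cβ / (1 + (i : ℝ)) ^ ν)
      ≤ (Real.exp (|lw| * cβ) / |lw|) *
        Real.exp ((lw * cβ / (1 - ν)) * ((1 + (t : ℝ)) ^ (1 - ν) - (1 + (τ : ℝ)) ^ (1 - ν))) := by
  have hL : (0:ℝ) < -lw := by linarith
  set p : ℝ := 1 - ν with hpdef
  have hp0 : 0 < p := by rw [hpdef]; linarith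
  have hp1 : p ≤ 1 := by rw [hpdef]; linarith
  rw [abs_of_neg hlw]
  have hcast : ∀ k : ℕ, (0:ℝ) < 1 + (k:ℝ) := fun k => by positivity
  have hβpos : ∀ k : ℕ, 0 < cβ / (1 + (k:ℝ)) ^ ν := fun k => by positivity
  have hβeq : ∀ k : ℕ, cβ / (1 + (k:ℝ)) ^ ν = cβ * (1 + (k:ℝ)) ^ (p - 1) := by
    intro k
    rw [show p - 1 = -ν from by rw [hpdef]; ring, Real.rpow_neg (hcast k).le, div_eq_mul_inv]
  have hβle : ∀ k : ℕ, cβ / (1 + (k:ℝ)) ^ ν ≤ cβ := by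
    intro k
    rw [div_le_iff₀ (by positivity)]
    have h1 : (1:ℝ) ≤ (1 + (k:ℝ)) ^ ν := by
      calc (1:ℝ) = 1 ^ ν := (Real.one_rpow ν).symm
        _ ≤ (1 + (k:ℝ)) ^ ν :=
          Real.rpow_le_rpow zero_le_one (by linarith [Nat.cast_nonneg (α := ℝ) k]) hν0.le
    nlinarith
  set g : ℕ → ℝ := fun n => cβ / p * ((1 + (t:ℝ)) ^ p - ((n:ℕ):ℝ) ^ p) with hg
  have hgdiff : ∀ i : ℕ, cβ / (1 + (i:ℝ)) ^ ν ≤ g i - g (i + 1) := by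
    intro i
    have hF1 := rpow_gap_lb hp0 hp1 (Nat.cast_nonneg (α := ℝ) i)
    have hgg : g i - g (i + 1) = cβ / p * ((1 + (i:ℝ)) ^ p - ((i:ℝ)) ^ p) := by
      simp only [hg]
      push_cast
      rw [show ((i:ℝ) + 1) = 1 + (i:ℝ) from by ring]
      ring
    rw [hgg, hβeq i]
    calc cβ * (1 + (i:ℝ)) ^ (p - 1) = cβ / p * (p * (1 + (i:ℝ)) ^ (p - 1)) := by
          field_simp
      _ ≤ cβ / p * ((1 + (i:ℝ)) ^ p - (i:ℝ) ^ p) :=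
          mul_le_mul_of_nonneg_left hF1 (by positivity)
  have hGbound : ∀ i : ℕ, i ≤ t →
      g (i + 1) - (∑ k ∈ Finset.Icc (i + 1) t, cβ / (1 + (k:ℝ)) ^ ν)
        ≤ cβ / (1 + (i:ℝ)) ^ ν / 2 := by
    intro i hit
    have htel : ∑ k ∈ Finset.Icc (i + 1) t, (g k - g (k + 1)) = g (i + 1) - g (t + 1) := by
      have h := sum_Icc_telescope (fun n => -g n) (i + 1) t (by omega)
      calc ∑ k ∈ Finset.Icc (i + 1) t, (g k - g (k + 1))
          = ∑ k ∈ Finset.Icc (i + 1) t, ((-g (k + 1)) - (-g k)) := by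
            apply Finset.sum_congr rfl; intro k _; ring
        _ = (-g (t + 1)) - (-g (i + 1)) := h
        _ = g (i + 1) - g (t + 1) := by ring
    have hgt1 : g (t + 1) = 0 := by
      simp only [hg]
      push_cast
      rw [show ((t:ℝ) + 1) = 1 + (t:ℝ) from by ring]
      ring
    have hterm : ∀ k ∈ Finset.Icc (i + 1) t,
        g k - g (k + 1) - cβ / (1 + (k:ℝ)) ^ ν
          ≤ -(cβ / 2) * (((k + 1 : ℕ)):ℝ) ^ (p - 1) - -(cβ / 2) * ((k:ℝ)) ^ (p - 1) := by
      intro k hk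
      rw [Finset.mem_Icc] at hk
      have hk0 : (0:ℝ) < (k:ℝ) := by
        have h1 : 0 < k := by omega
        exact_mod_cast h1
      have htrap := rpow_trap hp0 hp1 hk0
      have hgg : g k - g (k + 1) = cβ / p * ((1 + (k:ℝ)) ^ p - ((k:ℝ)) ^ p) := by
        simp only [hg]
        push_cast
        rw [show ((k:ℝ) + 1) = 1 + (k:ℝ) from by ring]
        ring
      have hmul2 : g k - g (k + 1) ≤ cβ / 2 * ((k:ℝ) ^ (p - 1) + (1 + (k:ℝ)) ^ (p - 1)) := by
        rw [hgg]
        calc cβ / p * ((1 + (k:ℝ)) ^ p - (k:ℝ) ^ p)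
            ≤ cβ / p * (p / 2 * ((k:ℝ) ^ (p - 1) + (1 + (k:ℝ)) ^ (p - 1))) :=
              mul_le_mul_of_nonneg_left htrap (by positivity)
          _ = cβ / 2 * ((k:ℝ) ^ (p - 1) + (1 + (k:ℝ)) ^ (p - 1)) := by field_simp
      have hβk := hβeq k
      push_cast
      rw [show ((k:ℝ) + 1) = 1 + (k:ℝ) from by ring]
      linarith
    have hsum := Finset.sum_le_sum hterm
    rw [Finset.sum_sub_distrib] at hsum
    rw [htel, hgt1] at hsum
    have htel2 := sum_Icc_telescope (fun n => -(cβ / 2) * ((n:ℕ):ℝ) ^ (p - 1)) (i + 1) t (by omega)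
    rw [htel2] at hsum
    have h1 : (0:ℝ) ≤ cβ / 2 * (((t + 1 : ℕ)):ℝ) ^ (p - 1) := by positivity
    have h2 : cβ / 2 * (((i + 1 : ℕ)):ℝ) ^ (p - 1) = cβ / (1 + (i:ℝ)) ^ ν / 2 := by
      push_cast
      rw [show ((i:ℝ) + 1) = 1 + (i:ℝ) from by ring, hβeq i]
      ring
    linarith
  have key : ∀ i : ℕ, i ≤ t →
      Real.exp (lw * ∑ k ∈ Finset.Icc (i + 1) t, cβ / (1 + (k:ℝ)) ^ ν) *
          (cβ / (1 + (i:ℝ)) ^ ν)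
        ≤ Real.exp (-lw * cβ) / (-lw) * (Real.exp (lw * g (i + 1)) - Real.exp (lw * g i)) := by
    intro i hit
    set b : ℝ := cβ / (1 + (i:ℝ)) ^ ν with hb
    set S : ℝ := ∑ k ∈ Finset.Icc (i + 1) t, cβ / (1 + (k:ℝ)) ^ ν with hS
    have hbpos : 0 < b := hβpos i
    have hble : b ≤ cβ := hβle i
    set u : ℝ := -lw * b with hu
    have hupos : 0 < u := mul_pos hL hbpos
    have huc : u ≤ -lw * cβ := mul_le_mul_of_nonneg_left hble hL.le
    have hdd : b ≤ g i - g (i + 1) := hgdiff i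
    have h2 : Real.exp (lw * (g i - g (i + 1))) ≤ Real.exp (-u) := by
      apply Real.exp_le_exp.mpr
      have hstep : lw * (g i - g (i + 1)) ≤ lw * b := by
        nlinarith [mul_nonneg hL.le (sub_nonneg.mpr hdd)]
      rw [hu]; linarith
    have hYd : Real.exp (lw * g (i + 1)) * (1 - Real.exp (-u))
        ≤ Real.exp (lw * g (i + 1)) - Real.exp (lw * g i) := by
      have hEi : Real.exp (lw * g i)
          = Real.exp (lw * g (i + 1)) * Real.exp (lw * (g i - g (i + 1))) := by
        rw [← Real.exp_add]; congr 1; ring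
      have hm := mul_le_mul_of_nonneg_left h2 (Real.exp_pos (lw * g (i + 1))).le
      rw [hEi]
      nlinarith [hm]
    have hG : g (i + 1) - S ≤ b / 2 := hGbound i hit
    have hexp1 : Real.exp (lw * S) ≤ Real.exp (lw * g (i + 1) + u / 2) := by
      apply Real.exp_le_exp.mpr
      have hstep := mul_le_mul_of_nonneg_left hG hL.le
      rw [hu]
      nlinarith [hstep]
    have hsinh : u / 2 ≤ Real.sinh (u / 2) := Real.self_le_sinh_iff.mpr (by positivity)
    rw [Real.sinh_eq] at hsinh
    have e1 : Real.exp (u / 2) * Real.exp (u / 2) = Real.exp u := by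
      rw [← Real.exp_add]; ring_nf
    have e2 : Real.exp (-(u / 2)) * Real.exp (u / 2) = 1 := by
      rw [← Real.exp_add]; simp
    have h1core : u * Real.exp (u / 2) ≤ Real.exp u - 1 := by
      nlinarith [Real.exp_pos (u / 2)]
    have h2core : Real.exp u ≤ Real.exp (-lw * cβ) := Real.exp_le_exp.mpr huc
    have h3core : 0 ≤ 1 - Real.exp (-u) := by
      have : Real.exp (-u) ≤ 1 := Real.exp_le_one_iff.mpr (by linarith)
      linarith
    have hcore : Real.exp (u / 2) * b ≤ Real.exp (-lw * cβ) / (-lw) * (1 - Real.exp (-u)) := by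
      rw [div_mul_eq_mul_div, le_div_iff₀ hL]
      have hb_u : b * (-lw) = u := by rw [hu]; ring
      calc Real.exp (u / 2) * b * (-lw) = u * Real.exp (u / 2) := by rw [← hb_u]; ring
        _ ≤ Real.exp u - 1 := h1core
        _ = Real.exp u * (1 - Real.exp (-u)) := by
            rw [mul_sub, mul_one, ← Real.exp_add]; simp
        _ ≤ Real.exp (-lw * cβ) * (1 - Real.exp (-u)) :=
            mul_le_mul_of_nonneg_right h2core h3core
    calc Real.exp (lw * S) * b
        ≤ Real.exp (lw * g (i + 1) + u / 2) * b :=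
          mul_le_mul_of_nonneg_right hexp1 hbpos.le
      _ = Real.exp (lw * g (i + 1)) * (Real.exp (u / 2) * b) := by rw [Real.exp_add]; ring
      _ ≤ Real.exp (lw * g (i + 1)) * (Real.exp (-lw * cβ) / (-lw) * (1 - Real.exp (-u))) :=
          mul_le_mul_of_nonneg_left hcore (Real.exp_pos _).le
      _ = Real.exp (-lw * cβ) / (-lw) * (Real.exp (lw * g (i + 1)) * (1 - Real.exp (-u))) := by
          ring
      _ ≤ Real.exp (-lw * cβ) / (-lw) * (Real.exp (lw * g (i + 1)) - Real.exp (lw * g i)) := by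
          apply mul_le_mul_of_nonneg_left hYd (by positivity)
  calc ∑ i ∈ Finset.range (τ + 1),
        Real.exp (lw * ∑ k ∈ Finset.Icc (i + 1) t, cβ / (1 + (k:ℝ)) ^ ν) *
          (cβ / (1 + (i:ℝ)) ^ ν)
      ≤ ∑ i ∈ Finset.range (τ + 1),
          Real.exp (-lw * cβ) / (-lw) * (Real.exp (lw * g (i + 1)) - Real.exp (lw * g i)) := by
        apply Finset.sum_le_sum
        intro i hi
        rw [Finset.mem_range] at hi
        exact key i (by omega)
    _ = Real.exp (-lw * cβ) / (-lw) *
          ∑ i ∈ Finset.range (τ + 1), (Real.exp (lw * g (i + 1)) - Real.exp (lw * g i)) := by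
        rw [Finset.mul_sum]
    _ = Real.exp (-lw * cβ) / (-lw) *
          (Real.exp (lw * g (τ + 1)) - Real.exp (lw * g 0)) := by
        rw [Finset.sum_range_sub (fun n => Real.exp (lw * g n))]
    _ ≤ Real.exp (-lw * cβ) / (-lw) * Real.exp (lw * g (τ + 1)) := by
        have h0 := Real.exp_pos (lw * g 0)
        have hpos : (0:ℝ) ≤ Real.exp (-lw * cβ) / (-lw) := by positivity
        nlinarith
    _ = Real.exp (-lw * cβ) / (-lw) *
          Real.exp ((lw * cβ / p) * ((1 + (t:ℝ)) ^ p - (1 + (τ:ℝ)) ^ p)) := by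
        congr 1
        congr 1
        simp only [hg]
        push_cast
        rw [show ((τ:ℝ) + 1) = 1 + (τ:ℝ) from by ring]
        field_simp
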